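/- arXiv:1610.09320 — 3 statements merged into one kernel-verified Lean document; each statement's English description precedes it below -/
import Mathlib

section
/- Let (G,s,t) be an st-connected net, C an s-minimal simple cycle of G, and ε* an entry node of C at minimum distance from s. Then there exists a shortest path p from s to ε* such that for every cycle C' containing ε* and every exit path q from a node ξ of C' to t, the path p is disjoint from q except possibly in its endpoint ε*. -/
/-- A directed multigraph: a type of vertices, a type of edges,
and source/target maps. -/
structure MultiDigraph (V E : Type) where
  src : E → V
  tgt : E → V

namespace MultiDigraph

variable {V E : Type}

/-- `G.IsWalk u p v` : the list of edges `p` forms a walk from `u` to `v`. -/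
def IsWalk (G : MultiDigraph V E) : V → List E → V → Prop
  | u, [], v => u = v
  | u, e :: p, v => G.src e = u ∧ IsWalk G (G.tgt e) p v

/-- The list of vertices visited by a walk starting at `u` with edges `p`. -/
def walkVerts (G : MultiDigraph V E) : V → List E → List V
  | u, [] => [u]
  | u, e :: p => u :: walkVerts G (G.tgt e) p

/-- A simple path: a walk repeating no vertex. -/
def IsSimplePath (G : MultiDigraph V E) (u : V) (p : List E) (v : V) : Prop :=
  G.IsWalk u p v ∧ (G.walkVerts u p).Nodup

/-- The set of simple `st`-paths using only edges from `F`. -/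
def SP (G : MultiDigraph V E) (F : Set E) (s t : V) : Set (List E) :=
  {p | G.IsSimplePath s p t ∧ ∀ e ∈ p, e ∈ F}

/-- An edge is irredundant if it lies on some simple `st`-path. -/
def EdgeIrredundant (G : MultiDigraph V E) (s t : V) (e : E) : Prop :=
  ∃ p, G.IsSimplePath s p t ∧ e ∈ p

/-- A vertex is irredundant if it lies on some simple `st`-path. -/
def VertexIrredundant (G : MultiDigraph V E) (s t : V) (x : V) : Prop :=
  ∃ p, G.IsSimplePath s p t ∧ x ∈ G.walkVerts s p

/-- A net is `st`-connected if every vertex lies on some `st`-path. -/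
def STConnected (G : MultiDigraph V E) (s t : V) : Prop :=
  ∀ x : V, ∃ p, G.IsWalk s p t ∧ x ∈ G.walkVerts s p

end MultiDigraph

namespace MultiDigraph

variable {V E : Type}

/-- A simple cycle based at `v` with edge list `p`: a nonempty closed walk
whose vertices (except the repeated endpoint) are all distinct. -/
def IsSimpleCycle (G : MultiDigraph V E) (v : V) (p : List E) : Prop :=
  G.IsWalk v p v ∧ p ≠ [] ∧ ((G.walkVerts v p).dropLast).Nodup

/-- The list of (distinct) vertices of a cycle. -/
def cycleVerts (G : MultiDigraph V E) (v : V) (p : List E) : List V :=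
  (G.walkVerts v p).dropLast

/-- The set of vertices of a cycle. -/
def cycleSet (G : MultiDigraph V E) (v : V) (p : List E) : Set V :=
  {x | x ∈ G.cycleVerts v p}

/-- `u` is an entry node of the vertex set `C`: `u ∈ C` and some simple path
from `s` to `u` meets `C` only in `u`. -/
def EntryNode (G : MultiDigraph V E) (s : V) (C : Set V) (u : V) : Prop :=
  u ∈ C ∧ ∃ q, G.IsSimplePath s q u ∧ ∀ x ∈ G.walkVerts s q, x ∈ C → x = u

/-- `u` is an exit node of the vertex set `C`: `u ∈ C` and some simple path
from `u` to `t` meets `C` only in `u`. -/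
def ExitNode (G : MultiDigraph V E) (t : V) (C : Set V) (u : V) : Prop :=
  u ∈ C ∧ ∃ q, G.IsSimplePath u q t ∧ ∀ x ∈ G.walkVerts u q, x ∈ C → x = u

/-- `q` is an entry path into `C` ending at `u`. -/
def IsEntryPath (G : MultiDigraph V E) (s : V) (C : Set V) (q : List E) (u : V) : Prop :=
  u ∈ C ∧ G.IsSimplePath s q u ∧ ∀ x ∈ G.walkVerts s q, x ∈ C → x = u

/-- `q` is an exit path from `C` starting at `u`. -/
def IsExitPath (G : MultiDigraph V E) (t : V) (C : Set V) (q : List E) (u : V) : Prop :=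
  u ∈ C ∧ G.IsSimplePath u q t ∧ ∀ x ∈ G.walkVerts u q, x ∈ C → x = u

/-- Length of a shortest directed walk from `u` to `v`. -/
noncomputable def dist (G : MultiDigraph V E) (u v : V) : ℕ :=
  sInf {n | ∃ p, G.IsWalk u p v ∧ p.length = n}

/-- `d_s(C)`: the minimum over `u ∈ C` of `dist s u`. -/
noncomputable def dS (G : MultiDigraph V E) (s : V) (C : Set V) : ℕ :=
  sInf {n | ∃ u ∈ C, G.dist s u = n}

/-- `d_t(C)`: the minimum over `u ∈ C` of `dist u t`. -/
noncomputable def dT (G : MultiDigraph V E) (t : V) (C : Set V) : ℕ :=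
  sInf {n | ∃ u ∈ C, G.dist u t = n}

/-- An `s`-minimal cycle: a simple cycle whose distance from `s` is minimal
among all simple cycles of `G`. -/
def SMinimal (G : MultiDigraph V E) (s v : V) (p : List E) : Prop :=
  G.IsSimpleCycle v p ∧
    ∀ v' p', G.IsSimpleCycle v' p' →
      G.dS s (G.cycleSet v p) ≤ G.dS s (G.cycleSet v' p')

end MultiDigraph

namespace MultiDigraph

variable {V E : Type} (G : MultiDigraph V E)

lemma isWalk_append {u v w : V} {p q : List E} (h1 : G.IsWalk u p v)
    (h2 : G.IsWalk v q w) : G.IsWalk u (p ++ q) w := by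
  induction p generalizing u with
  | nil => simp only [IsWalk] at h1; subst h1; simpa using h2
  | cons e p ih => exact ⟨h1.1, ih h1.2⟩

lemma walkVerts_ne_nil (u : V) (p : List E) : G.walkVerts u p ≠ [] := by
  cases p <;> simp [walkVerts]

lemma walk_split {u v x : V} {p : List E} (h : G.IsWalk u p v)
    (hx : x ∈ G.walkVerts u p) :
    ∃ p1 p2, p = p1 ++ p2 ∧ G.IsWalk u p1 x ∧ G.IsWalk x p2 v := by
  induction p generalizing u with
  | nil =>
    simp [walkVerts] at hx
    subst hx
    exact ⟨[], [], rfl, rfl, h⟩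
  | cons e p ih =>
    simp only [walkVerts, List.mem_cons] at hx
    rcases hx with rfl | hx
    · exact ⟨[], e :: p, rfl, rfl, h⟩
    · obtain ⟨p1, p2, hp, h1, h2⟩ := ih h.2 hx
      exact ⟨e :: p1, p2, by simp [hp], ⟨h.1, h1⟩, h2⟩

lemma walk_split_strict {u v x : V} {p : List E} (h : G.IsWalk u p v)
    (hx : x ∈ (G.walkVerts u p).dropLast) :
    ∃ p1 p2, p = p1 ++ p2 ∧ G.IsWalk u p1 x ∧ G.IsWalk x p2 v ∧ p2 ≠ [] := by
  induction p generalizing u with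
  | nil => simp [walkVerts] at hx
  | cons e p ih =>
    rw [show G.walkVerts u (e :: p) = u :: G.walkVerts (G.tgt e) p from rfl,
      List.dropLast_cons_of_ne_nil (G.walkVerts_ne_nil _ _), List.mem_cons] at hx
    rcases hx with rfl | hx
    · exact ⟨[], e :: p, rfl, rfl, h, by simp⟩
    · obtain ⟨p1, p2, hp, h1, h2, hne⟩ := ih h.2 hx
      exact ⟨e :: p1, p2, by simp [hp], ⟨h.1, h1⟩, h2, hne⟩

lemma walk_shorten {u v : V} {p : List E} (h : G.IsWalk u p v)
    (hnd : ¬ ((G.walkVerts u p).dropLast).Nodup) :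
    ∃ p', G.IsWalk u p' v ∧ p'.length < p.length ∧ p' ≠ [] := by
  induction p generalizing u with
  | nil => simp [walkVerts] at hnd
  | cons e p ih =>
    rw [show G.walkVerts u (e :: p) = u :: G.walkVerts (G.tgt e) p from rfl,
      List.dropLast_cons_of_ne_nil (G.walkVerts_ne_nil _ _), List.nodup_cons] at hnd
    push_neg at hnd
    by_cases hmem : u ∈ (G.walkVerts (G.tgt e) p).dropLast
    · obtain ⟨p1, p2, hp, _, h2, hne⟩ := G.walk_split_strict h.2 hmem
      refine ⟨p2, h2, ?_, hne⟩
      have := congrArg List.length hp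
      simp only [List.length_append] at this
      simp [this]
    · obtain ⟨p', h1, h2, h3⟩ := ih h.2 (hnd hmem)
      exact ⟨e :: p', ⟨h.1, h1⟩, by simpa using h2, by simp⟩

lemma exists_cycle_of_closed_walk {x : V} :
    ∀ n (p : List E), p.length ≤ n → G.IsWalk x p x → p ≠ [] →
      ∃ c, G.IsSimpleCycle x c := by
  intro n
  induction n with
  | zero => intro p hl _ hne; simp [List.length_eq_zero_iff.mp (Nat.le_zero.mp hl)] at hne
  | succ n ih =>
    intro p hl hw hne
    by_cases hnd : ((G.walkVerts x p).dropLast).Nodup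
    · exact ⟨p, hw, hne, hnd⟩
    · obtain ⟨p', h1, h2, h3⟩ := G.walk_shorten hw hnd
      exact ih p' (by omega) h1 h3

end MultiDigraph

open MultiDigraph in
/-- For an `s`-minimal cycle `C` and an entry node `ε` of `C` at minimum
distance from `s`, there is a shortest path `q` from `s` to `ε` that is
disjoint (except possibly in `ε`) from every exit path of every cycle
containing `ε`. -/
theorem stmt7 {V E : Type} (G : MultiDigraph V E) (s t : V)
    (hconn : G.STConnected s t) (v : V) (p : List E)
    (hmin : G.SMinimal s v p)
    (ε : V) (hε : G.EntryNode s (G.cycleSet v p) ε)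
    (hd : G.dist s ε = G.dS s (G.cycleSet v p)) :
    ∃ q, G.IsWalk s q ε ∧ q.length = G.dist s ε ∧
      ∀ v' p', G.IsSimpleCycle v' p' → ε ∈ G.cycleSet v' p' →
        ∀ ξ w, G.IsExitPath t (G.cycleSet v' p') w ξ →
          ∀ x ∈ G.walkVerts s q, x ∈ G.walkVerts ξ w → x = ε := by
  classical
  -- a shortest walk from s to ε exists
  obtain ⟨_, q0, hq0, _⟩ := hε
  have hne : {n | ∃ p, G.IsWalk s p ε ∧ p.length = n}.Nonempty :=
    ⟨q0.length, q0, hq0.1, rfl⟩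
  obtain ⟨q, hq, hqlen⟩ := Nat.sInf_mem hne
  refine ⟨q, hq, hqlen, ?_⟩
  intro v' p' hC' hεC' ξ w hexit x hxq hxw
  by_contra hxε
  -- split q at x
  obtain ⟨q1, q2, hqsplit, hq1, hq2⟩ := G.walk_split hq hxq
  have hq2ne : q2 ≠ [] := by
    intro h; subst h; exact hxε hq2
  -- dist s x < dist s ε
  have hdx : G.dist s x ≤ q1.length := Nat.sInf_le ⟨q1, hq1, rfl⟩
  have hq1lt : q1.length < q.length := by
    have := congrArg List.length hqsplit
    simp only [List.length_append] at this
    have : q2.length ≠ 0 := by simpa using hq2ne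
    omega
  -- split w at x
  obtain ⟨w1, w2, hwsplit, hw1, hw2⟩ := G.walk_split hexit.2.1.1 hxw
  -- ε and ξ lie on the closed walk p'
  have hεmem : ε ∈ G.walkVerts v' p' :=
    (List.dropLast_sublist _).subset hεC'
  have hξmem : ξ ∈ G.walkVerts v' p' :=
    (List.dropLast_sublist _).subset hexit.1
  obtain ⟨a, b, _, _, hb⟩ := G.walk_split hC'.1 hεmem
  obtain ⟨c, d, _, hc, _⟩ := G.walk_split hC'.1 hξmem
  -- closed walk from x to x : q2 (x → ε), b (ε → v'), c (v' → ξ), w1 (ξ → x)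
  have hclosed : G.IsWalk x (q2 ++ (b ++ (c ++ w1))) x :=
    G.isWalk_append hq2 (G.isWalk_append hb (G.isWalk_append hc hw1))
  have hclne : q2 ++ (b ++ (c ++ w1)) ≠ [] := by
    simp [hq2ne]
  obtain ⟨cc, hcc⟩ := G.exists_cycle_of_closed_walk _ _ le_rfl hclosed hclne
  -- x belongs to the extracted cycle
  have hxcc : x ∈ G.cycleSet x cc := by
    obtain ⟨e, cc', rfl⟩ := List.exists_cons_of_ne_nil hcc.2.1
    show x ∈ (G.walkVerts x (e :: cc')).dropLast
    rw [show G.walkVerts x (e :: cc') = x :: G.walkVerts (G.tgt e) cc' from rfl,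
      List.dropLast_cons_of_ne_nil (G.walkVerts_ne_nil _ _)]
    exact List.mem_cons_self
  -- contradiction with s-minimality
  have h1 : G.dS s (G.cycleSet x cc) ≤ G.dist s x := Nat.sInf_le ⟨x, hxcc, rfl⟩
  have h2 : G.dS s (G.cycleSet v p) ≤ G.dS s (G.cycleSet x cc) := hmin.2 x cc hcc
  have h3 : G.dist s ε = q.length := hqlen.symm
  omega
end

section
/- Let C be a splittable simple cycle in an st-connected net without any neutral hyper-chord from its entry region E to its exit region X. Then all edges of C lying strictly between ℓ_{NX} and f_{EN} (in the cyclic order) are redundant. -/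
namespace MultiDigraph

variable {V E : Type} [DecidableEq V]

/-- The cycle `(v, p)`, as written, is splittable: every entry node occurs
no later than every exit node in the vertex list of the cycle. -/
def SplittableAt (G : MultiDigraph V E) (s t v : V) (p : List E) : Prop :=
  G.IsSimpleCycle v p ∧
    ∀ u w, G.EntryNode s (G.cycleSet v p) u → G.ExitNode t (G.cycleSet v p) w →
      (G.cycleVerts v p).idxOf u ≤ (G.cycleVerts v p).idxOf w

/-- A cycle is splittable if some cyclic rewriting of it is splittable. -/
def Splittable (G : MultiDigraph V E) (s t v : V) (p : List E) : Prop :=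
  G.IsSimpleCycle v p ∧ ∃ (n : ℕ) (v' : V), G.SplittableAt s t v' (p.rotate n)

/-- The entry region of a splittable cycle written starting at the first entry
node: vertices strictly before the first exit node `ξ1`. -/
def Ereg (G : MultiDigraph V E) (v : V) (p : List E) (ξ1 : V) : Set V :=
  {x | x ∈ G.cycleVerts v p ∧
    (G.cycleVerts v p).idxOf x < (G.cycleVerts v p).idxOf ξ1}

/-- The exit region: from the first exit node `ξ1` (excluded iff `ξ1` is the
last entry node `lastE`) up to the last exit node `lastX`. -/
def Xreg (G : MultiDigraph V E) (v : V) (p : List E) (ξ1 lastE lastX : V) : Set V :=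
  {x | x ∈ G.cycleVerts v p ∧
    (if ξ1 = lastE then (G.cycleVerts v p).idxOf ξ1 < (G.cycleVerts v p).idxOf x
      else (G.cycleVerts v p).idxOf ξ1 ≤ (G.cycleVerts v p).idxOf x) ∧
    (G.cycleVerts v p).idxOf x ≤ (G.cycleVerts v p).idxOf lastX}

/-- The neutral region: vertices strictly after the last exit node `lastX`. -/
def Nreg (G : MultiDigraph V E) (v : V) (p : List E) (lastX : V) : Set V :=
  {x | x ∈ G.cycleVerts v p ∧
    (G.cycleVerts v p).idxOf lastX < (G.cycleVerts v p).idxOf x}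

/-- Data of a splittable cycle written starting at its first entry node `v`,
with first exit node `ξ1`, last entry node `lastE` and last exit node `lastX`. -/
structure SplitData (G : MultiDigraph V E) (s t v : V) (p : List E)
    (ξ1 lastE lastX : V) : Prop where
  splitAt : G.SplittableAt s t v p
  base_entry : G.EntryNode s (G.cycleSet v p) v
  firstExit : G.ExitNode t (G.cycleSet v p) ξ1 ∧
    ∀ w, G.ExitNode t (G.cycleSet v p) w →
      (G.cycleVerts v p).idxOf ξ1 ≤ (G.cycleVerts v p).idxOf w
  lastEntry : G.EntryNode s (G.cycleSet v p) lastE ∧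
    ∀ u, G.EntryNode s (G.cycleSet v p) u →
      (G.cycleVerts v p).idxOf u ≤ (G.cycleVerts v p).idxOf lastE
  lastExit : G.ExitNode t (G.cycleSet v p) lastX ∧
    ∀ w, G.ExitNode t (G.cycleSet v p) w →
      (G.cycleVerts v p).idxOf w ≤ (G.cycleVerts v p).idxOf lastX

/-- A hyper-chord for the cycle `(v,p)` from `x` to `y`: a simple path between
two cycle vertices using at least one edge not on the cycle. -/
def HyperChord (G : MultiDigraph V E) (v : V) (p : List E) (x y : V)
    (h : List E) : Prop :=
  x ∈ G.cycleSet v p ∧ y ∈ G.cycleSet v p ∧ G.IsSimplePath x h y ∧ ∃ e ∈ h, e ∉ p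

/-- A neutral hyper-chord: all of its vertices lying on the cycle, other than
its extremes, belong to the neutral region `Nr`. -/
def NeutralHyperChord (G : MultiDigraph V E) (v : V) (p : List E) (x y : V)
    (h : List E) (Nr : Set V) : Prop :=
  G.HyperChord v p x y h ∧
    ∀ z ∈ G.walkVerts x h, z ∈ G.cycleSet v p → z = x ∨ z = y ∨ z ∈ Nr

/-- `f` is the target in the neutral region of a neutral hyper-chord from the
entry region. -/
def TargetFromE (G : MultiDigraph V E) (v : V) (p : List E) (ξ1 lastX f : V) : Prop :=
  ∃ x ∈ G.Ereg v p ξ1, ∃ h, G.NeutralHyperChord v p x f h (G.Nreg v p lastX)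

/-- `ℓ` is the source in the neutral region of a neutral hyper-chord to the
exit region. -/
def SourceToX (G : MultiDigraph V E) (v : V) (p : List E)
    (ξ1 lastE lastX ℓ : V) : Prop :=
  ∃ y ∈ G.Xreg v p ξ1 lastE lastX, ∃ h,
    G.NeutralHyperChord v p ℓ y h (G.Nreg v p lastX)

/-- The path `(u, q)` touches the splitter of the splittable cycle `(v,p)`:
the splitter is the vertex `ξ1` if `ξ1 = lastE`, and otherwise the edge of the
cycle entering `ξ1`. -/
def TouchesSplitter (G : MultiDigraph V E) (p : List E) (ξ1 lastE u : V)
    (q : List E) : Prop :=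
  (ξ1 = lastE ∧ ξ1 ∈ G.walkVerts u q) ∨
  (ξ1 ≠ lastE ∧ ∃ e ∈ q, e ∈ p ∧ G.tgt e = ξ1)

end MultiDigraph
namespace MultiDigraph

variable {V E : Type} {G : MultiDigraph V E}

theorem isWalk_nil {u w : V} : G.IsWalk u [] w ↔ u = w := Iff.rfl

theorem isWalk_cons {u w : V} {e : E} {q : List E} :
    G.IsWalk u (e :: q) w ↔ G.src e = u ∧ G.IsWalk (G.tgt e) q w := Iff.rfl

theorem isWalk_append_s10 {u w : V} {q₁ q₂ : List E} :
    G.IsWalk u (q₁ ++ q₂) w ↔ ∃ m, G.IsWalk u q₁ m ∧ G.IsWalk m q₂ w := by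
  induction q₁ generalizing u with
  | nil =>
    simp only [List.nil_append, isWalk_nil]
    constructor
    · intro h; exact ⟨u, rfl, h⟩
    · rintro ⟨m, rfl, h⟩; exact h
  | cons e q ih =>
    simp only [List.cons_append, isWalk_cons, ih]
    constructor
    · rintro ⟨h1, m, h2, h3⟩; exact ⟨m, ⟨h1, h2⟩, h3⟩
    · rintro ⟨m, ⟨h1, h2⟩, h3⟩; exact ⟨h1, m, h2, h3⟩

theorem IsWalk.end_unique {u w w' : V} {q : List E} (h : G.IsWalk u q w)
    (h' : G.IsWalk u q w') : w = w' := by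
  induction q generalizing u with
  | nil => exact (isWalk_nil.1 h).symm.trans (isWalk_nil.1 h')
  | cons e q ih => exact ih h.2 h'.2

theorem IsWalk.walkVerts_eq {u w : V} {q : List E} (h : G.IsWalk u q w) :
    G.walkVerts u q = q.map G.src ++ [w] := by
  induction q generalizing u with
  | nil => simp [walkVerts, isWalk_nil.1 h]
  | cons e q ih =>
    simp only [walkVerts, List.map_cons, List.cons_append, ih h.2, h.1]

theorem IsWalk.start_mem {u w : V} {q : List E} (h : G.IsWalk u q w) :
    u ∈ q.map G.src ++ [w] := by
  cases q with
  | nil => simp [isWalk_nil.1 h]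
  | cons e q => exact List.mem_append_left _ (by simp [← h.1])

/-- split a walk at the first vertex satisfying `P` (possibly the start). -/
theorem walk_split_first {u d : V} {q : List E} (h : G.IsWalk u q d) (P : V → Prop)
    (hex : ∃ z ∈ q.map G.src ++ [d], P z) :
    ∃ q₁ q₂ y, q = q₁ ++ q₂ ∧ G.IsWalk u q₁ y ∧ G.IsWalk y q₂ d ∧ P y ∧
      ∀ z ∈ q₁.map G.src, ¬ P z := by
  induction q generalizing u with
  | nil =>
    refine ⟨[], [], d, rfl, h, isWalk_nil.2 rfl, ?_, by simp⟩
    obtain ⟨z, hz, hPz⟩ := hex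
    simp only [List.map_nil, List.nil_append, List.mem_singleton] at hz
    rwa [← hz]
  | cons e q ih =>
    by_cases hPu : P u
    · exact ⟨[], e :: q, u, rfl, isWalk_nil.2 rfl, h, hPu, by simp⟩
    · obtain ⟨z, hz, hPz⟩ := hex
      rw [List.map_cons] at hz
      have hz' : z ∈ q.map G.src ++ [d] := by
        rcases List.mem_append.1 hz with h1 | h1
        · rcases List.mem_cons.1 h1 with h2 | h2
          · exact absurd (by rwa [h2, h.1] at hPz) hPu
          · exact List.mem_append_left _ h2
        · exact List.mem_append_right _ h1
      obtain ⟨q₁, q₂, y, heq, hw1, hw2, hPy, hnP⟩ := ih h.2 ⟨z, hz', hPz⟩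
      refine ⟨e :: q₁, q₂, y, by rw [heq]; rfl, isWalk_cons.2 ⟨h.1, hw1⟩, hw2, hPy, ?_⟩
      intro z hzmem
      rw [List.map_cons] at hzmem
      rcases List.mem_cons.1 hzmem with h1 | h1
      · rw [h1, h.1]; exact hPu
      · exact hnP z h1

/-- split a walk at the first vertex strictly after the start satisfying `P`. -/
theorem walk_split_first_tail {u d : V} {q : List E} (h : G.IsWalk u q d) (P : V → Prop)
    (hex : ∃ z ∈ (q.map G.src ++ [d]).tail, P z) :
    ∃ q₁ q₂ y, q = q₁ ++ q₂ ∧ G.IsWalk u q₁ y ∧ G.IsWalk y q₂ d ∧ P y ∧ q₁ ≠ [] ∧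
      ∀ z ∈ (q₁.map G.src).tail, ¬ P z := by
  cases q with
  | nil => simp at hex
  | cons e q =>
    have hex' : ∃ z ∈ q.map G.src ++ [d], P z := by simpa using hex
    obtain ⟨q₁, q₂, y, heq, hw1, hw2, hPy, hnP⟩ := walk_split_first h.2 P hex'
    exact ⟨e :: q₁, q₂, y, by rw [heq]; rfl, isWalk_cons.2 ⟨h.1, hw1⟩, hw2, hPy, by simp,
      by simpa using hnP⟩

/-- split a walk at the last `src`-vertex satisfying `P`. -/
theorem walk_split_last {u d : V} {q : List E} (h : G.IsWalk u q d) (P : V → Prop)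
    (hex : ∃ z ∈ q.map G.src, P z) :
    ∃ q₁ q₂ x, q = q₁ ++ q₂ ∧ G.IsWalk u q₁ x ∧ G.IsWalk x q₂ d ∧ P x ∧ q₂ ≠ [] ∧
      ∀ z ∈ (q₂.map G.src).tail, ¬ P z := by
  induction q generalizing u with
  | nil => simp at hex
  | cons e q ih =>
    by_cases hq : ∃ z ∈ q.map G.src, P z
    · obtain ⟨q₁, q₂, x, heq, hw1, hw2, hPx, hne, hnP⟩ := ih h.2 hq
      exact ⟨e :: q₁, q₂, x, by rw [heq]; rfl, isWalk_cons.2 ⟨h.1, hw1⟩, hw2, hPx, hne, hnP⟩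
    · push_neg at hq
      have hPu : P u := by
        obtain ⟨z, hz, hPz⟩ := hex
        rw [List.map_cons] at hz
        rcases List.mem_cons.1 hz with h1 | h1
        · rwa [h1, h.1] at hPz
        · exact absurd hPz (hq z h1)
      refine ⟨[], e :: q, u, rfl, isWalk_nil.2 rfl, h, hPu, by simp, ?_⟩
      rw [List.map_cons, List.tail_cons]; exact hq

theorem prefix_verts {m w : V} {q₁ q₂ : List E} (h₂ : G.IsWalk m q₂ w) :
    List.IsPrefix (q₁.map G.src ++ [m]) ((q₁ ++ q₂).map G.src ++ [w]) := by
  cases q₂ with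
  | nil => rw [isWalk_nil.1 h₂]; simp
  | cons e q =>
    refine ⟨q.map G.src ++ [w], ?_⟩
    simp [← h₂.1]

theorem seg_verts_sublist {m₂ w : V} {a b c : List E} (h3 : G.IsWalk m₂ c w) :
    List.Sublist (b.map G.src ++ [m₂]) (((a ++ b) ++ c).map G.src ++ [w]) := by
  have h1 : List.Sublist (b.map G.src ++ [m₂]) (b.map G.src ++ (c.map G.src ++ [w])) :=
    List.Sublist.append_left (List.singleton_sublist.2 h3.start_mem) _
  have h2 : List.Sublist (b.map G.src ++ (c.map G.src ++ [w]))
      (a.map G.src ++ (b.map G.src ++ (c.map G.src ++ [w]))) := List.sublist_append_right _ _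
  have h4 := h1.trans h2
  simpa using h4

end MultiDigraph
namespace MultiDigraph

variable {V E : Type} [DecidableEq V] {G : MultiDigraph V E} {v : V} {p : List E}

theorem cycleVerts_eq (hw : G.IsWalk v p v) : G.cycleVerts v p = p.map G.src := by
  unfold cycleVerts
  rw [hw.walkVerts_eq]
  simp

theorem indexOf_append_cons {A B : List V} {a : V} (hnd : (A ++ a :: B).Nodup) :
    (A ++ a :: B).idxOf a = A.length := by
  have hna : a ∉ A := fun hmem =>
    (List.disjoint_of_nodup_append hnd) hmem (List.mem_cons_self)
  rw [List.idxOf_append_of_notMem hna, List.idxOf_cons_self, Nat.add_zero]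

theorem cycle_succ (hw : G.IsWalk v p v) (hnd : (G.cycleVerts v p).Nodup) {e : E}
    (he : e ∈ p) :
    (G.tgt e ∈ G.cycleVerts v p ∧
      (G.cycleVerts v p).idxOf (G.tgt e) = (G.cycleVerts v p).idxOf (G.src e) + 1) ∨
    (G.tgt e = v ∧ (G.cycleVerts v p).idxOf (G.src e) + 1 = p.length) := by
  have hLm := cycleVerts_eq hw
  rw [hLm] at hnd ⊢
  obtain ⟨p₁, p₂, rfl⟩ := List.append_of_mem he
  obtain ⟨m, hm1, hm2⟩ := isWalk_append_s10.1 hw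
  have hsrc : G.src e = m := hm2.1
  have hnd' : (List.map G.src p₁ ++ G.src e :: List.map G.src p₂).Nodup := by
    rwa [List.map_append, List.map_cons] at hnd
  have hidx : (List.map G.src (p₁ ++ e :: p₂)).idxOf (G.src e) = p₁.length := by
    rw [List.map_append, List.map_cons, indexOf_append_cons hnd', List.length_map]
  cases p₂ with
  | nil =>
    right
    refine ⟨isWalk_nil.1 hm2.2, ?_⟩
    rw [hidx]
    simp
  | cons e' p₂' =>
    left
    have htgt : G.src e' = G.tgt e := hm2.2.1
    constructor
    · rw [← htgt]
      simp
    · rw [← htgt, hidx]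
      have : List.map G.src (p₁ ++ e :: e' :: p₂') =
          (List.map G.src (p₁ ++ [e])) ++ G.src e' :: List.map G.src p₂' := by simp
      rw [this]
      rw [this] at hnd
      rw [indexOf_append_cons hnd]
      simp

theorem mem_Ereg_iff {ξ1 x : V} :
    x ∈ G.Ereg v p ξ1 ↔ x ∈ G.cycleVerts v p ∧
      (G.cycleVerts v p).idxOf x < (G.cycleVerts v p).idxOf ξ1 := Iff.rfl

theorem mem_Nreg_iff {lastX x : V} :
    x ∈ G.Nreg v p lastX ↔ x ∈ G.cycleVerts v p ∧
      (G.cycleVerts v p).idxOf lastX < (G.cycleVerts v p).idxOf x := Iff.rfl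

theorem mem_Xreg_iff {ξ1 lastE lastX x : V} :
    x ∈ G.Xreg v p ξ1 lastE lastX ↔ x ∈ G.cycleVerts v p ∧
      (if ξ1 = lastE then (G.cycleVerts v p).idxOf ξ1 < (G.cycleVerts v p).idxOf x
        else (G.cycleVerts v p).idxOf ξ1 ≤ (G.cycleVerts v p).idxOf x) ∧
      (G.cycleVerts v p).idxOf x ≤ (G.cycleVerts v p).idxOf lastX := Iff.rfl

theorem mkChord {lastX : V} (hw : G.IsWalk v p v) {x y : V} {r : List E}
    (hxy : G.IsWalk x r y) (hx : x ∈ G.cycleVerts v p) (hy : y ∈ G.cycleVerts v p)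
    (hnd : (r.map G.src ++ [y]).Nodup)
    (hint : ∀ z ∈ (r.map G.src).tail, z ∈ G.cycleVerts v p →
      (G.cycleVerts v p).idxOf lastX < (G.cycleVerts v p).idxOf z)
    (hnp : ∃ e' ∈ r, e' ∉ p) :
    G.NeutralHyperChord v p x y r (G.Nreg v p lastX) := by
  refine ⟨⟨hx, hy, ⟨hxy, by rw [hxy.walkVerts_eq]; exact hnd⟩, hnp⟩, ?_⟩
  intro z hz hzC
  rw [hxy.walkVerts_eq] at hz
  rcases List.mem_append.1 hz with h1 | h1
  · cases r with
    | nil => simp at h1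
    | cons e r' =>
      rw [List.map_cons] at h1
      rcases List.mem_cons.1 h1 with h2 | h2
      · left; rw [h2, hxy.1]
      · right; right; exact ⟨hzC, hint z h2 hzC⟩
  · right; left; exact List.mem_singleton.1 h1

theorem hep_mono {s u y' : V} {L' : List V} {τ q₁ q₂ r₁ r₂ : List E}
    (h1 : τ = q₁ ++ q₂) (h2 : τ = r₁ ++ r₂) (hwq : G.IsWalk s q₁ u) (hwr : G.IsWalk s r₁ y')
    (hnL : ∀ z ∈ q₁.map G.src, z ∉ L') (hy : y' ∈ L') (huL : u ∈ L') :
    ∃ u' q₁' q₂', r₁ = q₁' ++ q₂' ∧ G.IsWalk s q₁' u' ∧ u' ∈ L' ∧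
      ∀ z ∈ q₁'.map G.src, z ∉ L' := by
  rcases List.append_eq_append_iff.1 (h1.symm.trans h2) with ⟨w, hw1, _⟩ | ⟨w, hw1, _⟩
  · exact ⟨u, q₁, w, hw1, hwq, huL, hnL⟩
  · cases w with
    | nil =>
      have hrq : r₁ = q₁ := by simpa using hw1.symm
      exact ⟨u, q₁, [], by simp [hrq], hwq, huL, hnL⟩
    | cons e w' =>
      exfalso
      rw [hw1] at hwq
      obtain ⟨m, hm1, hm2⟩ := isWalk_append_s10.1 hwq
      have hmy : m = y' := hm1.end_unique hwr
      refine hnL y' ?_ hy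
      have hey : G.src e = y' := hm2.1.trans hmy
      rw [hw1, List.map_append, List.map_cons, ← hey]
      exact List.mem_append_right _ (List.mem_cons_self)

theorem hexit_mono {w x y t : V} {L' : List V} {ρ q₁ q₂ r₁ r₂ : List E}
    (h1 : ρ = q₁ ++ q₂) (h2 : ρ = r₁ ++ r₂) (hwq1 : G.IsWalk w q₁ x) (hwq2 : G.IsWalk x q₂ t)
    (hwr1 : G.IsWalk w r₁ y) (hwr2 : G.IsWalk y r₂ t)
    (hxL : x ∈ L') (hnL : ∀ z ∈ (q₂.map G.src ++ [t]).tail, z ∉ L') (hyL : y ∈ L') :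
    ∃ x' q₁' q₂', r₂ = q₁' ++ q₂' ∧ G.IsWalk y q₁' x' ∧ G.IsWalk x' q₂' t ∧ x' ∈ L' ∧
      ∀ z ∈ (q₂'.map G.src ++ [t]).tail, z ∉ L' := by
  rcases List.append_eq_append_iff.1 (h1.symm.trans h2) with ⟨w', hw1, hw2⟩ | ⟨w', hw1, hw2⟩
  · -- r₁ = q₁ ++ w', q₂ = w' ++ r₂
    cases w' with
    | nil =>
      have hxy : x = y := by
        rw [hw1, List.append_nil] at hwr1
        exact hwq1.end_unique hwr1
      refine ⟨x, [], r₂, by simp, isWalk_nil.2 hxy.symm, ?_, hxL, ?_⟩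
      · rwa [← (by simpa using hw2 : q₂ = r₂)]
      · rw [← (by simpa using hw2 : q₂ = r₂)]; exact hnL
    | cons e w'' =>
      exfalso
      rw [hw1] at hwr1
      obtain ⟨m, hm1, hm2⟩ := isWalk_append_s10.1 hwr1
      have hmx : m = x := hm1.end_unique hwq1
      rw [hmx] at hm2
      rw [hw2] at hwq2
      obtain ⟨m2, hm3, hm4⟩ := isWalk_append_s10.1 hwq2
      have hm2y : m2 = y := by
        have := hm3.end_unique hm2
        rw [← this]
      refine hnL y ?_ hyL
      rw [hw2, List.map_append]
      have : (List.map G.src (e :: w'') ++ (List.map G.src r₂ ++ [t])).tail =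
          (List.map G.src (e :: w'')).tail ++ (List.map G.src r₂ ++ [t]) := by
        rw [List.map_cons]; rfl
      rw [List.append_assoc, this]
      exact List.mem_append_right _ hwr2.start_mem
  · -- q₁ = r₁ ++ w', r₂ = w' ++ q₂
    rw [hw1] at hwq1
    obtain ⟨m, hm1, hm2⟩ := isWalk_append_s10.1 hwq1
    have hmy : m = y := hm1.end_unique hwr1
    rw [hmy] at hm2
    exact ⟨x, w', q₂, hw2, hm2, hwq2, hxL, hnL⟩

end MultiDigraph
namespace MultiDigraph

section ABMain

variable {V E : Type} [DecidableEq V] {G : MultiDigraph V E} {s t v : V} {p : List E}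
  {ξ1 lastE lastX f ℓ : V}

local notation "L" => G.cycleVerts v p

theorem lemB (hsd : G.SplitData s t v p ξ1 lastE lastX)
    (hno : ¬ ∃ x ∈ G.Ereg v p ξ1, ∃ y ∈ G.Xreg v p ξ1 lastE lastX, ∃ h,
      G.NeutralHyperChord v p x y h (G.Nreg v p lastX))
    (hf : (f ∈ G.Nreg v p lastX ∧ G.TargetFromE v p ξ1 lastX f ∧
        ∀ f' ∈ G.Nreg v p lastX, G.TargetFromE v p ξ1 lastX f' →
          (L).idxOf f ≤ (L).idxOf f') ∨
      (f = v ∧ ¬ ∃ f' ∈ G.Nreg v p lastX, G.TargetFromE v p ξ1 lastX f'))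
    (hlX : (L).idxOf lastX ≤ (L).idxOf ℓ) :
    ∀ n (τ : List E) (d : V), τ.length ≤ n →
      G.IsWalk s τ d → (τ.map G.src ++ [d]).Nodup → d ∈ L →
      (((L).idxOf ξ1 ≤ (L).idxOf d ∧ (L).idxOf d ≤ (L).idxOf lastX) ∨
        ((L).idxOf ℓ ≤ (L).idxOf d ∧ (f ≠ v → (L).idxOf d < (L).idxOf f))) →
      (∃ u q₁ q₂, τ = q₁ ++ q₂ ∧ G.IsWalk s q₁ u ∧ u ∈ L ∧ ∀ z ∈ q₁.map G.src, z ∉ L) →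
      ((ξ1 = lastE ∧ ξ1 ∈ τ.map G.src ++ [d]) ∨
        (ξ1 ≠ lastE ∧ ∃ e' ∈ τ, e' ∈ p ∧ G.tgt e' = ξ1)) := by
  have hw : G.IsWalk v p v := hsd.splitAt.1.1
  have hpne : p ≠ [] := hsd.splitAt.1.2.1
  have hndL : (L).Nodup := hsd.splitAt.1.2.2
  have hLm : L = p.map G.src := cycleVerts_eq hw
  have hinj : ∀ {a b : V}, a ∈ L → b ∈ L → (L).idxOf a = (L).idxOf b → a = b :=
    fun ha hb hab => (List.idxOf_inj ha).1 hab
  obtain ⟨e0, p0, hp0⟩ := List.exists_cons_of_ne_nil hpne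
  have hsrc0 : G.src e0 = v := by rw [hp0] at hw; exact hw.1
  have hv0 : (L).idxOf v = 0 := by
    rw [hLm, hp0, List.map_cons, hsrc0]; exact List.idxOf_cons_self
  have hvL : v ∈ L := by
    rw [hLm, hp0, List.map_cons, hsrc0]; exact List.mem_cons_self
  have hξL : ξ1 ∈ L := hsd.firstExit.1.1
  have hlEL : lastE ∈ L := hsd.lastEntry.1.1
  have hlXL : lastX ∈ L := hsd.lastExit.1.1
  have hLE : (L).idxOf lastE ≤ (L).idxOf ξ1 :=
    hsd.splitAt.2 lastE ξ1 hsd.lastEntry.1 hsd.firstExit.1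
  have hXX : (L).idxOf ξ1 ≤ (L).idxOf lastX := hsd.lastExit.2 ξ1 hsd.firstExit.1
  have hfnv : f ∈ G.Nreg v p lastX → f ≠ v := by
    intro hfN hfv
    have h2 := (mem_Nreg_iff.1 hfN).2
    rw [hfv, hv0] at h2
    omega
  have hEntryIdx : ∀ (u' : V) (q : List E), G.IsWalk s q u' → (q.map G.src ++ [u']).Nodup →
      u' ∈ L → (∀ z ∈ q.map G.src, z ∉ L) → (L).idxOf u' ≤ (L).idxOf lastE := by
    intro u' q hwq hnd' huL' hq
    refine hsd.lastEntry.2 u' ⟨huL', q, ⟨hwq, by rw [hwq.walkVerts_eq]; exact hnd'⟩, ?_⟩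
    intro x hx hxL
    rw [hwq.walkVerts_eq] at hx
    rcases List.mem_append.1 hx with h1 | h1
    · exact absurd hxL (hq x h1)
    · exact List.mem_singleton.1 h1
  intro n
  induction n with
  | zero =>
    intro τ d hlen hwalk hnd hdL hGood hep
    have hτ : τ = [] := List.length_eq_zero_iff.1 (Nat.le_zero.1 hlen)
    subst hτ
    obtain ⟨u, q₁, q₂, hτeq, hwq₁, huL, hq₁⟩ := hep
    obtain ⟨h1, h2⟩ := List.append_eq_nil_iff.1 hτeq.symm
    subst h1; subst h2
    have hud : u = d := (isWalk_nil.1 hwq₁).symm.trans (isWalk_nil.1 hwalk)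
    have huIdx : (L).idxOf u ≤ (L).idxOf lastE :=
      hEntryIdx u [] hwq₁ (by simp) huL hq₁
    have hdXi : (L).idxOf ξ1 ≤ (L).idxOf d := by
      rcases hGood with ⟨h1, _⟩ | ⟨h1, _⟩
      · exact h1
      · omega
    rw [hud] at huIdx
    have hdξ : d = ξ1 := hinj hdL hξL (by omega)
    have hEξ : ξ1 = lastE := hinj hξL hlEL (by omega)
    exact Or.inl ⟨hEξ, by simp [hdξ]⟩
  | succ n ih =>
    intro τ d hlen hwalk hnd hdL hGood hep
    have hdXi : (L).idxOf ξ1 ≤ (L).idxOf d := by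
      rcases hGood with ⟨h1, _⟩ | ⟨h1, _⟩
      · exact h1
      · omega
    by_cases hsplt : ξ1 = lastE ∧ d = ξ1
    · exact Or.inl ⟨hsplt.1, List.mem_append_right _ (by simp [hsplt.2])⟩
    have hdXreg : (L).idxOf d ≤ (L).idxOf lastX → d ∈ G.Xreg v p ξ1 lastE lastX := by
      intro hlow
      refine mem_Xreg_iff.2 ⟨hdL, ?_, hlow⟩
      by_cases hc : ξ1 = lastE
      · rw [if_pos hc]
        rcases Nat.eq_or_lt_of_le hdXi with heq | hlt
        · exact absurd ⟨hc, (hinj hξL hdL heq).symm⟩ hsplt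
        · exact hlt
      · rw [if_neg hc]; exact hdXi
    obtain ⟨u, q₁, q₂, hτeq, hwq₁, huL, hq₁⟩ := hep
    obtain ⟨m, hm1, hm2⟩ := isWalk_append_s10.1 (hτeq ▸ hwalk)
    have hmu : m = u := hm1.end_unique hwq₁
    rw [hmu] at hm2
    have hndq₁ : (q₁.map G.src ++ [u]).Nodup := by
      have hsub : (q₁.map G.src ++ [u]) <+: (τ.map G.src ++ [d]) := by
        rw [hτeq]; exact prefix_verts hm2
      exact List.Nodup.sublist hsub.sublist hnd
    have huIdx : (L).idxOf u ≤ (L).idxOf lastE := hEntryIdx u q₁ hwq₁ hndq₁ huL hq₁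
    cases q₂ with
    | nil =>
      have hud : u = d := isWalk_nil.1 hm2
      rw [hud] at huIdx
      have hdξ : d = ξ1 := hinj hdL hξL (by omega)
      have hEξ : ξ1 = lastE := hinj hξL hlEL (by omega)
      exact absurd ⟨hEξ, hdξ⟩ hsplt
    | cons e₂ q₂' =>
      have humem : u ∈ τ.map G.src := by
        rw [hτeq, List.map_append, List.map_cons, ← hm2.1]
        exact List.mem_append_right _ (List.mem_cons_self)
      obtain ⟨r₁, r₂, y', hτr, hwr₁, hwr₂, hPy', hr₂ne, hintr⟩ :=
        walk_split_last hwalk (fun z => z ∈ L ∧ (L).idxOf z ≤ (L).idxOf lastX)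
          ⟨u, humem, huL, by omega⟩
      have hy'L := hPy'.1
      have hy'mem : y' ∈ τ.map G.src ++ [d] := by
        rw [hτr, List.map_append, List.append_assoc]
        exact List.mem_append_right _ hwr₂.start_mem
      have hndr₁ : (r₁.map G.src ++ [y']).Nodup := by
        have hsub : (r₁.map G.src ++ [y']) <+: (τ.map G.src ++ [d]) := by
          rw [hτr]; exact prefix_verts hwr₂
        exact List.Nodup.sublist hsub.sublist hnd
      have recurse : (((L).idxOf ξ1 ≤ (L).idxOf y' ∧ (L).idxOf y' ≤ (L).idxOf lastX) ∨
          ((L).idxOf ℓ ≤ (L).idxOf y' ∧ (f ≠ v → (L).idxOf y' < (L).idxOf f))) →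
          ((ξ1 = lastE ∧ ξ1 ∈ τ.map G.src ++ [d]) ∨
            (ξ1 ≠ lastE ∧ ∃ e' ∈ τ, e' ∈ p ∧ G.tgt e' = ξ1)) := by
        intro hGood'
        have hlen' : r₁.length ≤ n := by
          have hlth := congrArg List.length hτr
          rw [List.length_append] at hlth
          have hr₂pos : 0 < r₂.length := List.length_pos_iff.2 hr₂ne
          omega
        have hep' := hep_mono hτeq hτr hwq₁ hwr₁ hq₁ hy'L huL
        rcases ih r₁ y' hlen' hwr₁ hndr₁ hy'L hGood' hep' with ⟨ha, hb⟩ | ⟨ha, e', h1, h2, h3⟩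
        · have hsub : (r₁.map G.src ++ [y']) <+: (τ.map G.src ++ [d]) := by
            rw [hτr]; exact prefix_verts hwr₂
          exact Or.inl ⟨ha, hsub.sublist.subset hb⟩
        · exact Or.inr ⟨ha, e', by rw [hτr]; exact List.mem_append_left _ h1, h2, h3⟩
      by_cases hallp : ∀ e' ∈ r₂, e' ∈ p
      · -- run along the cycle
        obtain ⟨e₁, r₂', hr₂⟩ := List.exists_cons_of_ne_nil hr₂ne
        have hwr₂' := hr₂ ▸ hwr₂
        have hsrc₁ : G.src e₁ = y' := hwr₂'.1
        have he₁p : e₁ ∈ p := hallp e₁ (by rw [hr₂]; exact List.mem_cons_self)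
        cases r₂' with
        | nil =>
          have htd : G.tgt e₁ = d := isWalk_nil.1 hwr₂'.2
          rcases cycle_succ hw hndL he₁p with ⟨htL, hsucc⟩ | ⟨htv, hlast⟩
          · rw [htd, hsrc₁] at hsucc
            by_cases hdlow : (L).idxOf d ≤ (L).idxOf lastX
            · rcases Nat.eq_or_lt_of_le hdXi with heq | hlt
              · have hdξ : d = ξ1 := (hinj hξL hdL heq).symm
                by_cases hc : ξ1 = lastE
                · exact absurd ⟨hc, hdξ⟩ hsplt
                · refine Or.inr ⟨hc, e₁, ?_, he₁p, by rw [htd, hdξ]⟩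
                  rw [hτr, hr₂]; simp
              · exact recurse (Or.inl ⟨by omega, hPy'.2⟩)
            · exact recurse (Or.inl ⟨by omega, by omega⟩)
          · have hdv : d = v := htd.symm.trans htv
            have h0 : (L).idxOf d = 0 := by rw [hdv, hv0]
            have hξv : ξ1 = v := hinj hξL hvL (by omega)
            have hEξ : ξ1 = lastE := (hinj hlEL hξL (by omega)).symm
            exact absurd ⟨hEξ, hdv.trans hξv.symm⟩ hsplt
        | cons e₂' r₂'' =>
          have hsrc₂ : G.src e₂' = G.tgt e₁ := hwr₂'.2.1
          have htmem : G.tgt e₁ ∈ (r₂.map G.src).tail := by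
            rw [hr₂, List.map_cons, List.map_cons, List.tail_cons, ← hsrc₂]
            exact List.mem_cons_self
          have he₂p : e₂' ∈ p := hallp e₂' (by rw [hr₂]; simp)
          have htL : G.tgt e₁ ∈ L := by
            rw [← hsrc₂, hLm]; exact List.mem_map_of_mem he₂p
          have hthigh : (L).idxOf lastX < (L).idxOf (G.tgt e₁) := by
            by_contra hcon; push_neg at hcon
            exact hintr _ htmem ⟨htL, hcon⟩
          rcases cycle_succ hw hndL he₁p with ⟨_, hsucc⟩ | ⟨htv, _⟩
          · rw [hsrc₁] at hsucc
            exact recurse (Or.inl ⟨by omega, by omega⟩)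
          · rw [htv, hv0] at hthigh; omega
      · -- hyper-chord
        push_neg at hallp
        have hint : ∀ z ∈ (r₂.map G.src).tail, z ∈ L → (L).idxOf lastX < (L).idxOf z := by
          intro z hz hzL
          by_contra hcon; push_neg at hcon
          exact hintr z hz ⟨hzL, hcon⟩
        have hndr₂ : (r₂.map G.src ++ [d]).Nodup := by
          refine List.Nodup.sublist ?_ hnd
          rw [hτr, List.map_append, List.append_assoc]
          exact List.sublist_append_right _ _
        have hchord := mkChord hw hwr₂ hy'L hdL hndr₂ hint hallp
        by_cases hy'E : (L).idxOf y' < (L).idxOf ξ1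
        · by_cases hdlow : (L).idxOf d ≤ (L).idxOf lastX
          · exact absurd ⟨y', mem_Ereg_iff.2 ⟨hy'L, hy'E⟩, d, hdXreg hdlow, r₂, hchord⟩ hno
          · have hGood2 : (L).idxOf ℓ ≤ (L).idxOf d ∧
                (f ≠ v → (L).idxOf d < (L).idxOf f) := by
              rcases hGood with ⟨_, h⟩ | h
              · exact absurd h hdlow
              · exact h
            have hdN : d ∈ G.Nreg v p lastX := mem_Nreg_iff.2 ⟨hdL, by omega⟩
            have htgtE : G.TargetFromE v p ξ1 lastX d :=
              ⟨y', mem_Ereg_iff.2 ⟨hy'L, hy'E⟩, r₂, hchord⟩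
            rcases hf with ⟨hfN, _, hmin⟩ | ⟨hfv, hnone⟩
            · have h1 := hmin d hdN htgtE
              have h2 := hGood2.2 (hfnv hfN)
              omega
            · exact absurd ⟨d, hdN, htgtE⟩ hnone
        · push_neg at hy'E
          by_cases hy'ξ : y' = ξ1 ∧ ξ1 = lastE
          · exact Or.inl ⟨hy'ξ.2, by rw [← hy'ξ.1]; exact hy'mem⟩
          · exact recurse (Or.inl ⟨hy'E, hPy'.2⟩)

theorem lemA (hsd : G.SplitData s t v p ξ1 lastE lastX)
    (hno : ¬ ∃ x ∈ G.Ereg v p ξ1, ∃ y ∈ G.Xreg v p ξ1 lastE lastX, ∃ h,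
      G.NeutralHyperChord v p x y h (G.Nreg v p lastX))
    (hf : (f ∈ G.Nreg v p lastX ∧ G.TargetFromE v p ξ1 lastX f ∧
        ∀ f' ∈ G.Nreg v p lastX, G.TargetFromE v p ξ1 lastX f' →
          (L).idxOf f ≤ (L).idxOf f') ∨
      (f = v ∧ ¬ ∃ f' ∈ G.Nreg v p lastX, G.TargetFromE v p ξ1 lastX f'))
    (hl : (ℓ ∈ G.Nreg v p lastX ∧ G.SourceToX v p ξ1 lastE lastX ℓ ∧
        ∀ ℓ' ∈ G.Nreg v p lastX, G.SourceToX v p ξ1 lastE lastX ℓ' →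
          (L).idxOf ℓ' ≤ (L).idxOf ℓ) ∨
      (ℓ = lastX ∧ ¬ ∃ ℓ' ∈ G.Nreg v p lastX, G.SourceToX v p ξ1 lastE lastX ℓ'))
    (hfl : f ≠ v → (L).idxOf ℓ < (L).idxOf f) :
    ∀ n (ρ : List E) (w : V), ρ.length ≤ n →
      G.IsWalk w ρ t → (ρ.map G.src ++ [t]).Nodup → w ∈ L →
      ((L).idxOf w < (L).idxOf ξ1 ∨
        ((L).idxOf lastX < (L).idxOf w ∧ (L).idxOf ℓ < (L).idxOf w)) →
      (∃ x q₁ q₂, ρ = q₁ ++ q₂ ∧ G.IsWalk w q₁ x ∧ G.IsWalk x q₂ t ∧ x ∈ L ∧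
        ∀ z ∈ (q₂.map G.src ++ [t]).tail, z ∉ L) →
      ((ξ1 = lastE ∧ ξ1 ∈ ρ.map G.src ++ [t]) ∨
        (ξ1 ≠ lastE ∧ ∃ e' ∈ ρ, e' ∈ p ∧ G.tgt e' = ξ1)) := by
  have hw : G.IsWalk v p v := hsd.splitAt.1.1
  have hpne : p ≠ [] := hsd.splitAt.1.2.1
  have hndL : (L).Nodup := hsd.splitAt.1.2.2
  have hLm : L = p.map G.src := cycleVerts_eq hw
  have hinj : ∀ {a b : V}, a ∈ L → b ∈ L → (L).idxOf a = (L).idxOf b → a = b :=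
    fun ha hb hab => (List.idxOf_inj ha).1 hab
  obtain ⟨e0, p0, hp0⟩ := List.exists_cons_of_ne_nil hpne
  have hsrc0 : G.src e0 = v := by rw [hp0] at hw; exact hw.1
  have hv0 : (L).idxOf v = 0 := by
    rw [hLm, hp0, List.map_cons, hsrc0]; exact List.idxOf_cons_self
  have hvL : v ∈ L := by
    rw [hLm, hp0, List.map_cons, hsrc0]; exact List.mem_cons_self
  have hξL : ξ1 ∈ L := hsd.firstExit.1.1
  have hlEL : lastE ∈ L := hsd.lastEntry.1.1
  have hlXL : lastX ∈ L := hsd.lastExit.1.1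
  have hLE : (L).idxOf lastE ≤ (L).idxOf ξ1 :=
    hsd.splitAt.2 lastE ξ1 hsd.lastEntry.1 hsd.firstExit.1
  have hXX : (L).idxOf ξ1 ≤ (L).idxOf lastX := hsd.lastExit.2 ξ1 hsd.firstExit.1
  have hfnv : f ∈ G.Nreg v p lastX → f ≠ v := by
    intro hfN hfv
    have h2 := (mem_Nreg_iff.1 hfN).2
    rw [hfv, hv0] at h2
    omega
  have hExitIdx : ∀ (x : V) (q : List E), G.IsWalk x q t → (q.map G.src ++ [t]).Nodup →
      x ∈ L → (∀ z ∈ (q.map G.src ++ [t]).tail, z ∉ L) →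
      (L).idxOf ξ1 ≤ (L).idxOf x ∧ (L).idxOf x ≤ (L).idxOf lastX := by
    intro x q hwq hnd' hxL hq
    have hexit : G.ExitNode t (G.cycleSet v p) x := by
      refine ⟨hxL, q, ⟨hwq, by rw [hwq.walkVerts_eq]; exact hnd'⟩, ?_⟩
      intro z hz hzL
      rw [hwq.walkVerts_eq] at hz
      cases q with
      | nil =>
        have hxt : x = t := isWalk_nil.1 hwq
        have : z = t := by simpa using hz
        rw [this, hxt]
      | cons e q' =>
        rw [List.map_cons, List.cons_append] at hz
        rcases List.mem_cons.1 hz with h1 | h1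
        · rw [h1, hwq.1]
        · exact absurd hzL
            (hq z (by rw [List.map_cons, List.cons_append, List.tail_cons]; exact h1))
    exact ⟨hsd.firstExit.2 x hexit, hsd.lastExit.2 x hexit⟩
  intro n
  induction n with
  | zero =>
    intro ρ w hlen hwalk hnd hwL hGoodA hexit
    exfalso
    have hρ : ρ = [] := List.length_eq_zero_iff.1 (Nat.le_zero.1 hlen)
    subst hρ
    obtain ⟨x, q₁, q₂, hρeq, hwq₁, hwq₂, hxL, hq₂⟩ := hexit
    obtain ⟨h1, h2⟩ := List.append_eq_nil_iff.1 hρeq.symm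
    subst h1; subst h2
    have hwx : w = x := isWalk_nil.1 hwq₁
    have hxIdx := hExitIdx x [] hwq₂ (by simp) hxL hq₂
    rw [← hwx] at hxIdx
    rcases hGoodA with h | ⟨h1, h2⟩ <;> omega
  | succ n ih =>
    intro ρ w hlen hwalk hnd hwL hGoodA hexit
    obtain ⟨x, q₁, q₂, hρeq, hwq₁, hwq₂, hxL, hq₂⟩ := hexit
    have hndq₂ : (q₂.map G.src ++ [t]).Nodup := by
      refine List.Nodup.sublist ?_ hnd
      rw [hρeq, List.map_append, List.append_assoc]
      exact List.sublist_append_right _ _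
    have hxIdx := hExitIdx x q₂ hwq₂ hndq₂ hxL hq₂
    have hxmem : x ∈ ρ.map G.src ++ [t] := by
      rw [hρeq, List.map_append, List.append_assoc]
      exact List.mem_append_right _ hwq₂.start_mem
    have hxw : x ≠ w := by
      intro h
      rw [h] at hxIdx
      rcases hGoodA with h1 | ⟨h1, h2⟩ <;> omega
    have hρne : ρ ≠ [] := by
      rintro rfl
      obtain ⟨h1, h2⟩ := List.append_eq_nil_iff.1 hρeq.symm
      subst h1
      exact hxw (isWalk_nil.1 hwq₁).symm
    have hxtail : x ∈ (ρ.map G.src ++ [t]).tail := by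
      obtain ⟨eh, ρ', hρ'⟩ := List.exists_cons_of_ne_nil hρne
      have hsh : G.src eh = w := by rw [hρ'] at hwalk; exact hwalk.1
      have hxm := hxmem
      rw [hρ', List.map_cons, List.cons_append] at hxm ⊢
      rw [List.tail_cons]
      rcases List.mem_cons.1 hxm with h1 | h1
      · exact absurd (h1.trans hsh) hxw
      · exact h1
    have recA : ∀ (r₁ r₂ : List E) (y : V), ρ = r₁ ++ r₂ → G.IsWalk w r₁ y →
        G.IsWalk y r₂ t → r₁ ≠ [] → y ∈ L →
        ((L).idxOf y < (L).idxOf ξ1 ∨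
          ((L).idxOf lastX < (L).idxOf y ∧ (L).idxOf ℓ < (L).idxOf y)) →
        ((ξ1 = lastE ∧ ξ1 ∈ ρ.map G.src ++ [t]) ∨
          (ξ1 ≠ lastE ∧ ∃ e' ∈ ρ, e' ∈ p ∧ G.tgt e' = ξ1)) := by
      intro r₁ r₂ y hρr hwr₁ hwr₂ hr₁ne hyL hGood'
      have hlen' : r₂.length ≤ n := by
        have hlth := congrArg List.length hρr
        rw [List.length_append] at hlth
        have := List.length_pos_iff.2 hr₁ne
        omega
      have hndr₂ : (r₂.map G.src ++ [t]).Nodup := by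
        refine List.Nodup.sublist ?_ hnd
        rw [hρr, List.map_append, List.append_assoc]
        exact List.sublist_append_right _ _
      have hex' := hexit_mono hρeq hρr hwq₁ hwq₂ hwr₁ hwr₂ hxL hq₂ hyL
      rcases ih r₂ y hlen' hwr₂ hndr₂ hyL hGood' hex' with ⟨ha, hb⟩ | ⟨ha, e', h1, h2, h3⟩
      · refine Or.inl ⟨ha, ?_⟩
        have hsub : List.Sublist (r₂.map G.src ++ [t]) (ρ.map G.src ++ [t]) := by
          rw [hρr, List.map_append, List.append_assoc]
          exact List.sublist_append_right _ _
        exact hsub.subset hb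
      · exact Or.inr ⟨ha, e', by rw [hρr]; exact List.mem_append_right _ h1, h2, h3⟩
    rcases hGoodA with hwE | ⟨hwhX, hwhl⟩
    · -- entry-region phase
      have hex : ∃ z ∈ (ρ.map G.src ++ [t]).tail,
          z ∈ L ∧ (L).idxOf ξ1 ≤ (L).idxOf z := ⟨x, hxtail, hxL, hxIdx.1⟩
      obtain ⟨r₁, r₂, d', hρr, hwr₁, hwr₂, hPd', hr₁ne, hintr⟩ :=
        walk_split_first_tail hwalk _ hex
      have hd'memρ : d' ∈ ρ.map G.src ++ [t] := by
        rw [hρr, List.map_append, List.append_assoc]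
        exact List.mem_append_right _ hwr₂.start_mem
      have hwmem : w ∈ r₁.map G.src := by
        obtain ⟨e₁, r₁', hr₁⟩ := List.exists_cons_of_ne_nil hr₁ne
        have : G.src e₁ = w := by rw [hr₁] at hwr₁; exact hwr₁.1
        rw [hr₁, List.map_cons, ← this]
        exact List.mem_cons_self
      obtain ⟨u₁, u₂, x'', hr₁split, hwu₁, hwu₂, hx''L, hu₂ne, hintu⟩ :=
        walk_split_last hwr₁ (fun z => z ∈ L) ⟨w, hwmem, hwL⟩
      obtain ⟨e₃, u₂', hu₂⟩ := List.exists_cons_of_ne_nil hu₂ne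
      have hwu₂c := hwu₂
      rw [hu₂] at hwu₂c
      have hsrc₃ : G.src e₃ = x'' := hwu₂c.1
      have hx''E : (L).idxOf x'' < (L).idxOf ξ1 := by
        by_cases hu₁ : u₁ = []
        · rw [hu₁] at hwu₁
          rw [← isWalk_nil.1 hwu₁]
          exact hwE
        · obtain ⟨e₄, u₁', hu₁'⟩ := List.exists_cons_of_ne_nil hu₁
          have hmem : x'' ∈ (r₁.map G.src).tail := by
            rw [hr₁split, hu₁', List.cons_append, List.map_cons, List.tail_cons,
              List.map_append]
            refine List.mem_append_right _ ?_
            rw [hu₂, List.map_cons, ← hsrc₃]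
            exact List.mem_cons_self
          have h5 := hintr x'' hmem
          by_contra hcon
          push_neg at hcon
          exact h5 ⟨hx''L, hcon⟩
      by_cases hallp : ∀ e' ∈ u₂, e' ∈ p
      · have he₃p : e₃ ∈ p := hallp e₃ (by rw [hu₂]; exact List.mem_cons_self)
        have hu₂'nil : u₂' = [] := by
          cases u₂' with
          | nil => rfl
          | cons e₄ u₂'' =>
            exfalso
            have hsrc₄ : G.src e₄ = G.tgt e₃ := hwu₂c.2.1
            have he₄p : e₄ ∈ p := hallp e₄ (by rw [hu₂]; simp)
            have hmem : G.tgt e₃ ∈ (u₂.map G.src).tail := by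
              rw [hu₂, List.map_cons, List.map_cons, List.tail_cons, ← hsrc₄]
              exact List.mem_cons_self
            exact hintu _ hmem (by rw [← hsrc₄, hLm]; exact List.mem_map_of_mem he₄p)
        have htd : G.tgt e₃ = d' := by
          rw [hu₂'nil] at hwu₂c
          exact isWalk_nil.1 hwu₂c.2
        rcases cycle_succ hw hndL he₃p with ⟨_, hsucc⟩ | ⟨htv, _⟩
        · rw [htd, hsrc₃] at hsucc
          have hd'ξ : d' = ξ1 := hinj hPd'.1 hξL (by have := hPd'.2; omega)
          by_cases hc : ξ1 = lastE
          · exact Or.inl ⟨hc, by rw [← hd'ξ]; exact hd'memρ⟩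
          · refine Or.inr ⟨hc, e₃, ?_, he₃p, by rw [htd, hd'ξ]⟩
            rw [hρr, hr₁split, hu₂, hu₂'nil]; simp
        · have hdv : d' = v := htd.symm.trans htv
          have h0 : (L).idxOf d' = 0 := by rw [hdv, hv0]
          have hξv : ξ1 = v := hinj hξL hvL (by have := hPd'.2; omega)
          have hEξ : ξ1 = lastE := (hinj hlEL hξL (by have := hPd'.2; omega)).symm
          refine Or.inl ⟨hEξ, ?_⟩
          rw [hξv, ← hdv]
          exact hd'memρ
      · push_neg at hallp
        have hndu₂ : (u₂.map G.src ++ [d']).Nodup := by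
          refine List.Nodup.sublist ?_ hnd
          rw [hρr, hr₁split]
          exact seg_verts_sublist hwr₂
        have hchordint : ∀ z ∈ (u₂.map G.src).tail, z ∈ L →
            (L).idxOf lastX < (L).idxOf z :=
          fun z hz hzL => absurd hzL (hintu z hz)
        have hchord := mkChord hw hwu₂ hx''L hPd'.1 hndu₂ hchordint hallp
        have hx''Ereg : x'' ∈ G.Ereg v p ξ1 := mem_Ereg_iff.2 ⟨hx''L, hx''E⟩
        by_cases hd'low : (L).idxOf d' ≤ (L).idxOf lastX
        · by_cases hsp : d' = ξ1 ∧ ξ1 = lastE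
          · exact Or.inl ⟨hsp.2, by rw [← hsp.1]; exact hd'memρ⟩
          · have hd'X : d' ∈ G.Xreg v p ξ1 lastE lastX := by
              refine mem_Xreg_iff.2 ⟨hPd'.1, ?_, hd'low⟩
              by_cases hc : ξ1 = lastE
              · rw [if_pos hc]
                rcases Nat.eq_or_lt_of_le hPd'.2 with heq | hlt
                · exact absurd ⟨(hinj hξL hPd'.1 heq).symm, hc⟩ hsp
                · exact hlt
              · rw [if_neg hc]; exact hPd'.2
            exact absurd ⟨x'', hx''Ereg, d', hd'X, u₂, hchord⟩ hno
        · push_neg at hd'low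
          have hd'N : d' ∈ G.Nreg v p lastX := mem_Nreg_iff.2 ⟨hPd'.1, hd'low⟩
          have htgt : G.TargetFromE v p ξ1 lastX d' := ⟨x'', hx''Ereg, u₂, hchord⟩
          rcases hf with ⟨hfN, _, hmin⟩ | ⟨hfv, hnone⟩
          · have h1 := hmin d' hd'N htgt
            have h2 := hfl (hfnv hfN)
            exact recA r₁ r₂ d' hρr hwr₁ hwr₂ hr₁ne hPd'.1 (Or.inr ⟨hd'low, by omega⟩)
          · exact absurd ⟨d', hd'N, htgt⟩ hnone
    · -- neutral-region phase
      have hex : ∃ z ∈ (ρ.map G.src ++ [t]).tail,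
          z ∈ L ∧ (L).idxOf z ≤ (L).idxOf lastX := ⟨x, hxtail, hxL, hxIdx.2⟩
      obtain ⟨r₁, r₂, y, hρr, hwr₁, hwr₂, hPy, hr₁ne, hintr⟩ :=
        walk_split_first_tail hwalk _ hex
      have hymemρ : y ∈ ρ.map G.src ++ [t] := by
        rw [hρr, List.map_append, List.append_assoc]
        exact List.mem_append_right _ hwr₂.start_mem
      by_cases hallp : ∀ e' ∈ r₁, e' ∈ p
      · rcases List.eq_nil_or_concat r₁ with h | ⟨r₁', e₂, hr₁⟩
        · exact absurd h hr₁ne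
        rw [List.concat_eq_append] at hr₁
        obtain ⟨m2, hm2a, hm2b⟩ := isWalk_append_s10.1 (hr₁ ▸ hwr₁)
        have hsrc₂ : G.src e₂ = m2 := hm2b.1
        have htgt₂ : G.tgt e₂ = y := isWalk_nil.1 hm2b.2
        have he₂p : e₂ ∈ p := hallp e₂ (by rw [hr₁]; simp)
        have hm2high : (L).idxOf lastX < (L).idxOf m2 := by
          by_cases hr₁' : r₁' = []
          · rw [hr₁'] at hm2a
            rw [← isWalk_nil.1 hm2a]
            exact hwhX
          · obtain ⟨e₅, r₁'', hr₁''⟩ := List.exists_cons_of_ne_nil hr₁'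
            have hmem : m2 ∈ (r₁.map G.src).tail := by
              rw [hr₁, hr₁'', List.cons_append, List.map_cons, List.tail_cons,
                List.map_append, List.map_singleton]
              refine List.mem_append_right _ ?_
              rw [hsrc₂]
              exact List.mem_singleton_self _
            have hm2L : m2 ∈ L := by rw [← hsrc₂, hLm]; exact List.mem_map_of_mem he₂p
            have h5 := hintr m2 hmem
            by_contra hcon
            push_neg at hcon
            exact h5 ⟨hm2L, hcon⟩
        rcases cycle_succ hw hndL he₂p with ⟨_, hsucc⟩ | ⟨htv, _⟩
        · rw [htgt₂, hsrc₂] at hsucc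
          have := hPy.2
          omega
        · have hyv : y = v := htgt₂.symm.trans htv
          by_cases hξ0 : (L).idxOf ξ1 = 0
          · have hξv : ξ1 = v := hinj hξL hvL (by omega)
            have hEξ : ξ1 = lastE := (hinj hlEL hξL (by omega)).symm
            refine Or.inl ⟨hEξ, ?_⟩
            rw [hξv, ← hyv]
            exact hymemρ
          · exact recA r₁ r₂ y hρr hwr₁ hwr₂ hr₁ne (hyv ▸ hvL)
              (Or.inl (by rw [hyv, hv0]; omega))
      · push_neg at hallp
        have hndr₁v : (r₁.map G.src ++ [y]).Nodup := by
          have hsub : (r₁.map G.src ++ [y]) <+: (ρ.map G.src ++ [t]) := by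
            rw [hρr]; exact prefix_verts hwr₂
          exact List.Nodup.sublist hsub.sublist hnd
        have hint' : ∀ z ∈ (r₁.map G.src).tail, z ∈ L →
            (L).idxOf lastX < (L).idxOf z := by
          intro z hz hzL
          by_contra hcon
          push_neg at hcon
          exact hintr z hz ⟨hzL, hcon⟩
        have hchord := mkChord hw hwr₁ hwL hPy.1 hndr₁v hint' hallp
        by_cases hsp : y = ξ1 ∧ ξ1 = lastE
        · exact Or.inl ⟨hsp.2, by rw [← hsp.1]; exact hymemρ⟩
        by_cases hyE : (L).idxOf y < (L).idxOf ξ1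
        · exact recA r₁ r₂ y hρr hwr₁ hwr₂ hr₁ne hPy.1 (Or.inl hyE)
        · push_neg at hyE
          have hyX : y ∈ G.Xreg v p ξ1 lastE lastX := by
            refine mem_Xreg_iff.2 ⟨hPy.1, ?_, hPy.2⟩
            by_cases hc : ξ1 = lastE
            · rw [if_pos hc]
              rcases Nat.eq_or_lt_of_le hyE with heq | hlt
              · exact absurd ⟨(hinj hξL hPy.1 heq).symm, hc⟩ hsp
              · exact hlt
            · rw [if_neg hc]; exact hyE
          have hsrcX : G.SourceToX v p ξ1 lastE lastX w := ⟨y, hyX, r₁, hchord⟩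
          rcases hl with ⟨_, _, hmax⟩ | ⟨_, hnone⟩
          · have := hmax w (mem_Nreg_iff.2 ⟨hwL, hwhX⟩) hsrcX
            omega
          · exact absurd ⟨w, mem_Nreg_iff.2 ⟨hwL, hwhX⟩, hsrcX⟩ hnone

end ABMain

end MultiDigraph

open MultiDigraph in
/-- If a splittable simple cycle has no neutral hyper-chord from its entry
region `E` to its exit region `X`, then all edges of the cycle lying strictly
between `ℓ_{NX}` and `f_{EN}` (in the cyclic order) are redundant.  Here `f`
is `f_{EN}` (defaulting to the first entry node `v` if no neutral hyper-chord
from `E` to `N` exists) and `ℓ` is `ℓ_{NX}` (defaulting to the last exit node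
`lastX` if no neutral hyper-chord from `N` to `X` exists). -/
theorem stmt10 {V E : Type} [DecidableEq V] (G : MultiDigraph V E)
    (s t v : V) (p : List E) (ξ1 lastE lastX : V)
    (hconn : G.STConnected s t)
    (hsd : G.SplitData s t v p ξ1 lastE lastX)
    (hno : ¬ ∃ x ∈ G.Ereg v p ξ1, ∃ y ∈ G.Xreg v p ξ1 lastE lastX, ∃ h,
      G.NeutralHyperChord v p x y h (G.Nreg v p lastX))
    (f ℓ : V)
    (hf : (f ∈ G.Nreg v p lastX ∧ G.TargetFromE v p ξ1 lastX f ∧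
        ∀ f' ∈ G.Nreg v p lastX, G.TargetFromE v p ξ1 lastX f' →
          (G.cycleVerts v p).idxOf f ≤ (G.cycleVerts v p).idxOf f') ∨
      (f = v ∧ ¬ ∃ f' ∈ G.Nreg v p lastX, G.TargetFromE v p ξ1 lastX f'))
    (hℓ : (ℓ ∈ G.Nreg v p lastX ∧ G.SourceToX v p ξ1 lastE lastX ℓ ∧
        ∀ ℓ' ∈ G.Nreg v p lastX, G.SourceToX v p ξ1 lastE lastX ℓ' →
          (G.cycleVerts v p).idxOf ℓ' ≤ (G.cycleVerts v p).idxOf ℓ) ∨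
      (ℓ = lastX ∧ ¬ ∃ ℓ' ∈ G.Nreg v p lastX, G.SourceToX v p ξ1 lastE lastX ℓ')) :
    ∀ e ∈ p,
      ((f = v ∧ (G.cycleVerts v p).idxOf ℓ ≤ (G.cycleVerts v p).idxOf (G.src e)) ∨
       (f ≠ v ∧ (G.cycleVerts v p).idxOf ℓ ≤ (G.cycleVerts v p).idxOf (G.src e) ∧
         G.tgt e ≠ v ∧
         (G.cycleVerts v p).idxOf (G.tgt e) ≤ (G.cycleVerts v p).idxOf f)) →
      ¬ G.EdgeIrredundant s t e := by
  intro e he hcond hirr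
  obtain ⟨π, ⟨hπw, hπnd⟩, heπ⟩ := hirr
  have hw : G.IsWalk v p v := hsd.splitAt.1.1
  have hpne : p ≠ [] := hsd.splitAt.1.2.1
  have hndL : (G.cycleVerts v p).Nodup := hsd.splitAt.1.2.2
  have hLm : G.cycleVerts v p = p.map G.src := cycleVerts_eq hw
  have hinj : ∀ {a b : V}, a ∈ G.cycleVerts v p → b ∈ G.cycleVerts v p →
      (G.cycleVerts v p).idxOf a = (G.cycleVerts v p).idxOf b → a = b :=
    fun ha hb hab => (List.idxOf_inj ha).1 hab
  obtain ⟨e0, p0, hp0⟩ := List.exists_cons_of_ne_nil hpne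
  have hsrc0 : G.src e0 = v := by rw [hp0] at hw; exact hw.1
  have hv0 : (G.cycleVerts v p).idxOf v = 0 := by
    rw [hLm, hp0, List.map_cons, hsrc0]; exact List.idxOf_cons_self
  have hvL : v ∈ G.cycleVerts v p := by
    rw [hLm, hp0, List.map_cons, hsrc0]; exact List.mem_cons_self
  have hξL : ξ1 ∈ G.cycleVerts v p := hsd.firstExit.1.1
  have hlEL : lastE ∈ G.cycleVerts v p := hsd.lastEntry.1.1
  have hLE : (G.cycleVerts v p).idxOf lastE ≤ (G.cycleVerts v p).idxOf ξ1 :=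
    hsd.splitAt.2 lastE ξ1 hsd.lastEntry.1 hsd.firstExit.1
  rw [hπw.walkVerts_eq] at hπnd
  obtain ⟨π₁, π₂, hπeq⟩ := List.append_of_mem heπ
  obtain ⟨m, hm1, hm2⟩ := isWalk_append_s10.1 (hπeq ▸ hπw)
  have hma : m = G.src e := hm2.1.symm
  rw [hma] at hm1 hm2
  have hwq₂ : G.IsWalk (G.tgt e) π₂ t := hm2.2
  have haL : G.src e ∈ G.cycleVerts v p := by
    rw [hLm]; exact List.mem_map_of_mem he
  have hlXl : (G.cycleVerts v p).idxOf lastX ≤ (G.cycleVerts v p).idxOf ℓ := by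
    rcases hℓ with ⟨hN, _, _⟩ | ⟨hEq, _⟩
    · exact le_of_lt (mem_Nreg_iff.1 hN).2
    · rw [hEq]
  have hia : (G.cycleVerts v p).idxOf ℓ ≤ (G.cycleVerts v p).idxOf (G.src e) := by
    rcases hcond with ⟨_, h⟩ | ⟨_, h, _⟩ <;> exact h
  have harr : π.map G.src ++ [t] =
      (π₁.map G.src ++ [G.src e]) ++ (π₂.map G.src ++ [t]) := by
    rw [hπeq]; simp
  have hnd1 : (π₁.map G.src ++ [G.src e]).Nodup := by
    refine List.Nodup.sublist ?_ (harr ▸ hπnd)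
    exact (List.sublist_append_left _ _)
  have hnd2 : (π₂.map G.src ++ [t]).Nodup := by
    refine List.Nodup.sublist ?_ (harr ▸ hπnd)
    exact (List.sublist_append_right _ _)
  have hdisj : List.Disjoint (π₁.map G.src ++ [G.src e]) (π₂.map G.src ++ [t]) :=
    List.disjoint_of_nodup_append (harr ▸ hπnd)
  -- entry data for π₁
  obtain ⟨q₁, q₂, u, hq, hwq1, hwq2', hPu, hnotin⟩ :=
    walk_split_first hm1 (fun z => z ∈ G.cycleVerts v p) ⟨G.src e, by simp, haL⟩
  have hepB : ∃ u' q₁' q₂', π₁ = q₁' ++ q₂' ∧ G.IsWalk s q₁' u' ∧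
      u' ∈ G.cycleVerts v p ∧ ∀ z ∈ q₁'.map G.src, z ∉ G.cycleVerts v p :=
    ⟨u, q₁, q₂, hq, hwq1, hPu, hnotin⟩
  -- exit data for π₂
  have hbL : G.tgt e ∈ G.cycleVerts v p := by
    rcases cycle_succ hw hndL he with ⟨h, _⟩ | ⟨h, _⟩
    · exact h
    · rw [h]; exact hvL
  have hexitA : ∃ x q₁' q₂', π₂ = q₁' ++ q₂' ∧ G.IsWalk (G.tgt e) q₁' x ∧
      G.IsWalk x q₂' t ∧ x ∈ G.cycleVerts v p ∧
      ∀ z ∈ (q₂'.map G.src ++ [t]).tail, z ∉ G.cycleVerts v p := by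
    by_cases htL' : t ∈ G.cycleVerts v p
    · exact ⟨t, π₂, [], by simp, hwq₂, isWalk_nil.2 rfl, htL', by simp⟩
    · have hπ₂ne : π₂ ≠ [] := by
        intro h
        rw [h] at hwq₂
        exact absurd ((isWalk_nil.1 hwq₂) ▸ hbL) htL'
      obtain ⟨e₅, π₂', hπ₂⟩ := List.exists_cons_of_ne_nil hπ₂ne
      have hbmem : G.tgt e ∈ π₂.map G.src := by
        have h5 : G.src e₅ = G.tgt e := (hπ₂ ▸ hwq₂).1
        rw [hπ₂, List.map_cons, ← h5]
        exact List.mem_cons_self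
      obtain ⟨w₁, w₂, x, hweq, hww1, hww2, hxL, hw₂ne, hcond'⟩ :=
        walk_split_last hwq₂ (fun z => z ∈ G.cycleVerts v p) ⟨G.tgt e, hbmem, hbL⟩
      refine ⟨x, w₁, w₂, hweq, hww1, hww2, hxL, ?_⟩
      intro z hz
      cases w₂ with
      | nil => simp at hz
      | cons e₆ w₂' =>
        rw [List.map_cons, List.cons_append, List.tail_cons] at hz
        rcases List.mem_append.1 hz with h1 | h1
        · exact hcond' z (by rw [List.map_cons, List.tail_cons]; exact h1)
        · rw [List.mem_singleton.1 h1]; exact htL'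
  -- the two touches
  have TB := lemB hsd hno hf hlXl π₁.length π₁ (G.src e) le_rfl hm1 hnd1 haL
  have TA : ((ξ1 = lastE ∧ ξ1 ∈ π₂.map G.src ++ [t]) ∨
      (ξ1 ≠ lastE ∧ ∃ e' ∈ π₂, e' ∈ p ∧ G.tgt e' = ξ1)) := by
    rcases cycle_succ hw hndL he with ⟨htL, hsucc⟩ | ⟨htv, hlast⟩
    · -- non-wrap : tgt e is high
      exact lemA hsd hno hf hℓ
        (by
          intro hne
          rcases hcond with ⟨hfv, _⟩ | ⟨_, _, _, h3⟩
          · exact absurd hfv hne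
          · omega)
        π₂.length π₂ (G.tgt e) le_rfl hwq₂ hnd2 hbL (Or.inr ⟨by omega, by omega⟩) hexitA
    · -- wrap : tgt e = v
      have hbv : G.tgt e = v := htv
      have hfv : f = v := by
        rcases hcond with ⟨h, _⟩ | ⟨_, _, h2, _⟩
        · exact h
        · exact absurd hbv h2
      by_cases hξ0 : (G.cycleVerts v p).idxOf ξ1 = 0
      · have hξv : ξ1 = v := hinj hξL hvL (by omega)
        have hEξ : ξ1 = lastE := (hinj hlEL hξL (by omega)).symm
        refine Or.inl ⟨hEξ, ?_⟩
        rw [hξv, ← hbv]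
        exact hwq₂.start_mem
      · exact lemA hsd hno hf hℓ (fun hne => absurd hfv hne)
          π₂.length π₂ (G.tgt e) le_rfl hwq₂ hnd2 hbL
          (Or.inl (by rw [hbv, hv0]; omega)) hexitA
  have hGoodB : (((G.cycleVerts v p).idxOf ξ1 ≤ (G.cycleVerts v p).idxOf (G.src e) ∧
      (G.cycleVerts v p).idxOf (G.src e) ≤ (G.cycleVerts v p).idxOf lastX) ∨
      ((G.cycleVerts v p).idxOf ℓ ≤ (G.cycleVerts v p).idxOf (G.src e) ∧
        (f ≠ v → (G.cycleVerts v p).idxOf (G.src e) < (G.cycleVerts v p).idxOf f))) := by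
    refine Or.inr ⟨hia, ?_⟩
    intro hne
    rcases hcond with ⟨hfv, _⟩ | ⟨_, _, h2, h3⟩
    · exact absurd hfv hne
    · rcases cycle_succ hw hndL he with ⟨_, hsucc⟩ | ⟨htv, _⟩
      · omega
      · exact absurd htv h2
  have TB' := TB hGoodB hepB
  -- combine the two touches
  rcases TB' with ⟨hEq1, hv1⟩ | ⟨hne1, e₁, he₁π, he₁p, he₁t⟩
  · rcases TA with ⟨_, hv2⟩ | ⟨hne2, _⟩
    · exact hdisj hv1 hv2
    · exact hne2 hEq1
  · rcases TA with ⟨hEq2, _⟩ | ⟨_, e₂, he₂π, he₂p, he₂t⟩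
    · exact hne1 hEq2
    · have hs₁L : G.src e₁ ∈ G.cycleVerts v p := by
        rw [hLm]; exact List.mem_map_of_mem he₁p
      have hs₂L : G.src e₂ ∈ G.cycleVerts v p := by
        rw [hLm]; exact List.mem_map_of_mem he₂p
      rcases cycle_succ hw hndL he₁p with ⟨_, hs₁⟩ | ⟨htv₁, _⟩
      · rcases cycle_succ hw hndL he₂p with ⟨_, hs₂⟩ | ⟨htv₂, _⟩
        · rw [he₁t] at hs₁
          rw [he₂t] at hs₂
          have hss : G.src e₁ = G.src e₂ := hinj hs₁L hs₂L (by omega)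
          refine hdisj (List.mem_append_left _ (List.mem_map_of_mem he₁π)) ?_
          rw [hss]
          exact List.mem_append_left _ (List.mem_map_of_mem he₂π)
        · have h0 : (G.cycleVerts v p).idxOf ξ1 = 0 := by
            rw [← he₂t, htv₂, hv0]
          exact absurd ((hinj hlEL hξL (by omega)).symm) hne1
      · have h0 : (G.cycleVerts v p).idxOf ξ1 = 0 := by
          rw [← he₁t, htv₁, hv0]
        exact absurd ((hinj hlEL hξL (by omega)).symm) hne1
end

section
/- Let C be a splittable simple cycle in an st-connected net and p a path from the entry region E to the exit region X whose only vertices in E∪X are its two extremes. Then either p contains the splitter, or p is a neutral hyper-chord from E to X. -/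
namespace MultiDigraph

variable {V E : Type}

lemma walkVerts_length' (G : MultiDigraph V E) (u : V) (q : List E) :
    (G.walkVerts u q).length = q.length + 1 := by
  induction q generalizing u with
  | nil => rfl
  | cons e q ih => simp [walkVerts, ih]

lemma walkVerts_getElem_zero' (G : MultiDigraph V E) (u : V) (q : List E)
    (h : 0 < (G.walkVerts u q).length) : (G.walkVerts u q)[0] = u := by
  cases q <;> rfl

lemma walk_src_tgt' (G : MultiDigraph V E) :
    ∀ (q : List E) (u w : V), G.IsWalk u q w → ∀ i, (hi : i < q.length) →
      G.src q[i] = (G.walkVerts u q)[i]'(by rw [G.walkVerts_length']; omega) ∧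
      G.tgt q[i] = (G.walkVerts u q)[i+1]'(by rw [G.walkVerts_length']; omega) := by
  intro q
  induction q with
  | nil => intro u w h i hi; simp at hi
  | cons e q ih =>
    intro u w h i hi
    obtain ⟨hsrc, hwalk⟩ := h
    cases i with
    | zero =>
      refine ⟨by simpa [walkVerts] using hsrc, ?_⟩
      show G.tgt e = (G.walkVerts (G.tgt e) q)[0]'(by rw [G.walkVerts_length']; omega)
      exact (G.walkVerts_getElem_zero' _ _ _).symm
    | succ j =>
      have := ih (G.tgt e) w hwalk j (by simpa using hi)
      simpa [walkVerts] using this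

lemma tgt_mem_walkVerts' (G : MultiDigraph V E) {q : List E} {u w : V}
    (h : G.IsWalk u q w) {e : E} (he : e ∈ q) : G.tgt e ∈ G.walkVerts u q := by
  obtain ⟨i, hi, rfl⟩ := List.mem_iff_getElem.1 he
  rw [(G.walk_src_tgt' q u w h i hi).2]
  exact List.getElem_mem _

lemma cycleVerts_length' (G : MultiDigraph V E) (v : V) (p : List E) :
    (G.cycleVerts v p).length = p.length := by
  simp [cycleVerts, G.walkVerts_length']

variable [DecidableEq V]

/-- Key lemma: a walk from a vertex strictly before `ξ1` to a vertex
at or after `ξ1`, using only cycle edges, uses the cycle edge entering `ξ1`. -/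
lemma keyB' (G : MultiDigraph V E) {v : V} {p : List E}
    (hw : G.IsWalk v p v) (hnd : (G.cycleVerts v p).Nodup)
    {ξ1 : V} (hξ : ξ1 ∈ G.cycleVerts v p) :
    ∀ (q : List E) (u y : V),
      (G.cycleVerts v p).idxOf u < (G.cycleVerts v p).idxOf ξ1 →
      G.IsWalk u q y →
      (G.cycleVerts v p).idxOf ξ1 ≤ (G.cycleVerts v p).idxOf y →
      (∀ e ∈ q, e ∈ p) →
      ∃ e ∈ q, G.tgt e = ξ1 := by
  intro q
  induction q with
  | nil =>
    intro u y hlt hwq hge _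
    cases hwq
    omega
  | cons e q ih =>
    intro u y hlt hwq hge hall
    obtain ⟨hsrc, hwq'⟩ := hwq
    have hep : e ∈ p := hall e (List.mem_cons_self)
    obtain ⟨i, hi, rfl⟩ := List.mem_iff_getElem.1 hep
    have hlen : (G.cycleVerts v p).length = p.length := G.cycleVerts_length' v p
    have hξlt : (G.cycleVerts v p).idxOf ξ1 < (G.cycleVerts v p).length :=
      List.idxOf_lt_length_iff.2 hξ
    have hst := G.walk_src_tgt' p v v hw i hi
    have hsrcC : (G.cycleVerts v p)[i]'(by omega) = u := by
      simp only [cycleVerts]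
      rw [List.getElem_dropLast, ← hst.1, hsrc]
    have hidx : (G.cycleVerts v p).idxOf u = i := by
      rw [← hsrcC]; exact List.Nodup.idxOf_getElem hnd i (by omega)
    have hi1 : i + 1 < (G.cycleVerts v p).length := by omega
    have htgtC : G.tgt p[i] = (G.cycleVerts v p)[i+1]'hi1 := by
      simp only [cycleVerts]
      rw [hst.2, List.getElem_dropLast]
    have hidxt : (G.cycleVerts v p).idxOf (G.tgt p[i]) = i + 1 := by
      rw [htgtC]; exact List.Nodup.idxOf_getElem hnd (i+1) hi1
    rcases eq_or_lt_of_le (show i + 1 ≤ (G.cycleVerts v p).idxOf ξ1 by omega) with heq | hlt2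
    · refine ⟨p[i], List.mem_cons_self, ?_⟩
      have hmem : G.tgt p[i] ∈ G.cycleVerts v p := htgtC ▸ List.getElem_mem hi1
      exact (List.idxOf_inj hmem).1 (by omega)
    · obtain ⟨f, hf, hfξ⟩ := ih (G.tgt p[i]) y (by omega) hwq' hge
        (fun f hf => hall f (List.mem_cons_of_mem _ hf))
      exact ⟨f, List.mem_cons_of_mem _ hf, hfξ⟩

end MultiDigraph

open MultiDigraph in
/-- A path from the entry region `E` to the exit region `X` of a splittable
simple cycle whose only vertices in `E ∪ X` are its extremes either touches
the splitter or is a neutral hyper-chord from `E` to `X`. -/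
theorem stmt15 {V E : Type} [DecidableEq V] (G : MultiDigraph V E)
    (s t v : V) (p : List E) (ξ1 lastE lastX : V)
    (hconn : G.STConnected s t)
    (hsd : G.SplitData s t v p ξ1 lastE lastX)
    (x y : V) (q : List E)
    (hx : x ∈ G.Ereg v p ξ1) (hy : y ∈ G.Xreg v p ξ1 lastE lastX)
    (hq : G.IsSimplePath x q y)
    (hint : ∀ z ∈ G.walkVerts x q, z ≠ x → z ≠ y →
      z ∉ G.Ereg v p ξ1 ∧ z ∉ G.Xreg v p ξ1 lastE lastX) :
    G.TouchesSplitter p ξ1 lastE x q ∨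
    G.NeutralHyperChord v p x y q (G.Nreg v p lastX) := by
  obtain ⟨⟨hw, hpne, hnd⟩, _⟩ := hsd.splitAt
  have hndC : (G.cycleVerts v p).Nodup := hnd
  have hξC : ξ1 ∈ G.cycleVerts v p := hsd.firstExit.1.1
  simp only [Ereg, Set.mem_setOf_eq] at hx
  simp only [Xreg, Set.mem_setOf_eq] at hy
  obtain ⟨hxC, hxlt⟩ := hx
  obtain ⟨hyC, hyge, hyle⟩ := hy
  have hyge' : (G.cycleVerts v p).idxOf ξ1 ≤ (G.cycleVerts v p).idxOf y := by
    split at hyge <;> omega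
  by_cases hsp1 : ξ1 = lastE ∧ ξ1 ∈ G.walkVerts x q
  · exact Or.inl (Or.inl hsp1)
  by_cases hsp2 : ξ1 ≠ lastE ∧ ∃ e ∈ q, e ∈ p ∧ G.tgt e = ξ1
  · exact Or.inl (Or.inr hsp2)
  right
  have hedge : ∃ e ∈ q, e ∉ p := by
    by_contra hcon
    push_neg at hcon
    obtain ⟨e, heq, hte⟩ := G.keyB' hw hndC hξC q x y hxlt hq.1 hyge' hcon
    by_cases hel : ξ1 = lastE
    · exact hsp1 ⟨hel, hte ▸ G.tgt_mem_walkVerts' hq.1 heq⟩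
    · exact hsp2 ⟨hel, e, heq, hcon e heq, hte⟩
  refine ⟨⟨hxC, hyC, hq, hedge⟩, ?_⟩
  intro z hz hzC
  by_cases hzx : z = x
  · exact Or.inl hzx
  by_cases hzy : z = y
  · exact Or.inr (Or.inl hzy)
  obtain ⟨hznE, hznX⟩ := hint z hz hzx hzy
  right; right
  simp only [Ereg, Set.mem_setOf_eq] at hznE
  simp only [Xreg, Set.mem_setOf_eq] at hznX
  have hzCv : z ∈ G.cycleVerts v p := hzC
  have h1 : (G.cycleVerts v p).idxOf ξ1 ≤ (G.cycleVerts v p).idxOf z := by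
    by_contra h
    exact hznE ⟨hzCv, by omega⟩
  refine ⟨hzCv, ?_⟩
  by_cases hel : ξ1 = lastE
  · have hne : z ≠ ξ1 := by
      rintro rfl
      exact hsp1 ⟨hel, hz⟩
    have h2 : (G.cycleVerts v p).idxOf ξ1 < (G.cycleVerts v p).idxOf z := by
      rcases lt_or_eq_of_le h1 with h | h
      · exact h
      · exfalso
        apply hne
        have hξlt : (G.cycleVerts v p).idxOf ξ1 < (G.cycleVerts v p).length :=
          List.idxOf_lt_length_iff.2 hξC
        have hzlt : (G.cycleVerts v p).idxOf z < (G.cycleVerts v p).length :=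
          List.idxOf_lt_length_iff.2 hzCv
        rw [← List.getElem_idxOf hzlt, ← List.getElem_idxOf hξlt]
        congr 1
        omega
    by_contra h3
    exact hznX ⟨hzCv, by rw [if_pos hel]; omega, by omega⟩
  · by_contra h3
    exact hznX ⟨hzCv, by rw [if_neg hel]; omega, by omega⟩
end
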